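/- For all integers n ≥ 1 and D ≥ 0, one has Q(n,D) = Σ_{m=2}^{D} ( r(n, m−1) − r(n, D−m) )·log m. -/

import Mathlib

open Finset

/-- `Q(n,D) = Σ_{m=0}^{D} r(n−1,m)·log C(D,m)`, where `r(n,D) = C(n+D,n)`. -/
noncomputable def Qconst (n D : ℕ) : ℝ :=
  ∑ m ∈ Finset.range (D + 1),
    (Nat.choose (n - 1 + m) (n - 1) : ℝ) * Real.log (Nat.choose D m)

private lemma log_factorial (t : ℕ) :
    Real.log (Nat.factorial t) = ∑ j ∈ Finset.Icc 2 t, Real.log j := by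
  induction t with
  | zero => simp
  | succ t ih =>
    rcases Nat.lt_or_ge t 1 with h | h
    · interval_cases t <;> simp
    · have h2 : (2:ℕ) ≤ t + 1 := by omega
      rw [Finset.sum_Icc_succ_top h2, ← ih, Nat.factorial_succ, Nat.cast_mul,
        Real.log_mul (by positivity) (by exact_mod_cast (Nat.factorial_pos t).ne'),
        add_comm]

private lemma log_choose {m D : ℕ} (h : m ≤ D) :
    Real.log (Nat.choose D m) =
      Real.log (Nat.factorial D) - Real.log (Nat.factorial m)
        - Real.log (Nat.factorial (D - m)) := by
  have key := Nat.choose_mul_factorial_mul_factorial h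
  have : ((D.choose m : ℝ)) * (Nat.factorial m) * (Nat.factorial (D - m))
      = (Nat.factorial D : ℝ) := by exact_mod_cast congrArg (Nat.cast : ℕ → ℝ) key
  have hc : (0:ℝ) < (D.choose m : ℝ) := by exact_mod_cast Nat.choose_pos h
  have hm : (0:ℝ) < (Nat.factorial m : ℝ) := by exact_mod_cast Nat.factorial_pos m
  have hd : (0:ℝ) < (Nat.factorial (D - m) : ℝ) := by exact_mod_cast Nat.factorial_pos (D - m)
  rw [← this, Real.log_mul (by positivity) hd.ne', Real.log_mul hc.ne' hm.ne']
  ring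

theorem stmt_6 (n D : ℕ) (hn : 1 ≤ n) :
    Qconst n D = ∑ m ∈ Finset.Icc 2 D,
      ((Nat.choose (n + (m - 1)) n : ℝ) - (Nat.choose (n + (D - m)) n : ℝ)) *
        Real.log m := by
  -- hockey stick
  have hockey : ∀ k : ℕ, ∑ m ∈ range (k + 1), ((n - 1 + m).choose (n - 1) : ℝ)
      = ((n + k).choose n : ℝ) := by
    intro k
    have h1 : ∑ m ∈ range (k + 1), (n - 1 + m).choose (n - 1) = (n + k).choose n := by
      have h2 := Nat.sum_Icc_choose (n - 1 + k) (n - 1)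
      have h3 : Finset.Icc (n - 1) (n - 1 + k) = Finset.Ico (n - 1) (n - 1 + k + 1) := by
        rw [Finset.Ico_add_one_right_eq_Icc]
      rw [h3, Finset.sum_Ico_eq_sum_range] at h2
      have h4 : n - 1 + k + 1 - (n - 1) = k + 1 := by omega
      rw [h4] at h2
      rw [h2]
      congr 1 <;> omega
    exact_mod_cast congrArg (Nat.cast : ℕ → ℝ) h1
  -- rewrite each log choose as a sum over Icc 2 D
  have step1 : Qconst n D = ∑ m ∈ range (D + 1), ∑ j ∈ Finset.Icc 2 D,
      ((n - 1 + m).choose (n - 1) : ℝ) *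
        (Real.log j - (if j ≤ m then Real.log j else 0)
          - (if j ≤ D - m then Real.log j else 0)) := by
    unfold Qconst
    refine Finset.sum_congr rfl fun m hm => ?_
    have hmD : m ≤ D := by simp at hm; omega
    rw [← Finset.mul_sum]
    congr 1
    have e1 : ∀ t : ℕ, t ≤ D → (∑ j ∈ Finset.Icc 2 D,
        (if j ≤ t then Real.log j else 0)) = Real.log (Nat.factorial t) := by
      intro t ht
      rw [log_factorial, ← Finset.sum_filter]
      congr 1
      ext j
      simp only [Finset.mem_filter, Finset.mem_Icc]
      omega
    rw [log_choose hmD, ← e1 m hmD, ← e1 (D - m) (by omega), log_factorial D,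
      Finset.sum_sub_distrib, Finset.sum_sub_distrib]
  rw [step1, Finset.sum_comm]
  refine Finset.sum_congr rfl fun j hj => ?_
  have hj2 : 2 ≤ j := (Finset.mem_Icc.mp hj).1
  have hjD : j ≤ D := (Finset.mem_Icc.mp hj).2
  -- now compute the inner sum over m
  have filt1 : Finset.filter (fun m => j ≤ m) (range (D + 1)) = Finset.Ico j (D + 1) := by
    ext m; simp only [Finset.mem_filter, Finset.mem_range, Finset.mem_Ico]; omega
  have filt2 : Finset.filter (fun m => j ≤ D - m) (range (D + 1)) = range (D - j + 1) := by
    ext m; simp only [Finset.mem_filter, Finset.mem_range]; omega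
  have split1 : ∑ m ∈ range (D + 1),
      ((n - 1 + m).choose (n - 1) : ℝ) * (if j ≤ m then Real.log j else 0)
      = (((n + D).choose n : ℝ) - ((n + (j - 1)).choose n : ℝ)) * Real.log j := by
    have e : ∑ m ∈ range (D + 1),
        ((n - 1 + m).choose (n - 1) : ℝ) * (if j ≤ m then Real.log j else 0)
        = ∑ m ∈ Finset.Ico j (D + 1), ((n - 1 + m).choose (n - 1) : ℝ) * Real.log j := by
      rw [← filt1, Finset.sum_filter]
      exact Finset.sum_congr rfl fun m _ => by split <;> simp
    rw [e, ← Finset.sum_mul]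
    congr 1
    have hc : ∑ m ∈ Finset.Ico 0 j, ((n - 1 + m).choose (n - 1) : ℝ)
        + ∑ m ∈ Finset.Ico j (D + 1), ((n - 1 + m).choose (n - 1) : ℝ)
        = ∑ m ∈ Finset.Ico 0 (D + 1), ((n - 1 + m).choose (n - 1) : ℝ) :=
      Finset.sum_Ico_consecutive _ (by omega) (by omega)
    have h0 : Finset.Ico 0 (D + 1) = range (D + 1) := by rw [Finset.range_eq_Ico]
    have h1 : Finset.Ico 0 j = range ((j - 1) + 1) := by
      rw [Finset.range_eq_Ico]; congr 1; omega
    rw [h0, h1, hockey, hockey] at hc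
    linarith
  have split2 : ∑ m ∈ range (D + 1),
      ((n - 1 + m).choose (n - 1) : ℝ) * (if j ≤ D - m then Real.log j else 0)
      = ((n + (D - j)).choose n : ℝ) * Real.log j := by
    have e : ∑ m ∈ range (D + 1),
        ((n - 1 + m).choose (n - 1) : ℝ) * (if j ≤ D - m then Real.log j else 0)
        = ∑ m ∈ range (D - j + 1), ((n - 1 + m).choose (n - 1) : ℝ) * Real.log j := by
      rw [← filt2, Finset.sum_filter]
      exact Finset.sum_congr rfl fun m _ => by split <;> simp
    rw [e, ← Finset.sum_mul, hockey]
  have split0 : ∑ m ∈ range (D + 1),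
      ((n - 1 + m).choose (n - 1) : ℝ) * Real.log j
      = ((n + D).choose n : ℝ) * Real.log j := by
    rw [← Finset.sum_mul, hockey]
  calc ∑ m ∈ range (D + 1), ((n - 1 + m).choose (n - 1) : ℝ) *
        ((Real.log j - if j ≤ m then Real.log j else 0) - if j ≤ D - m then Real.log j else 0)
      = ∑ m ∈ range (D + 1), (((n - 1 + m).choose (n - 1) : ℝ) * Real.log j
          - ((n - 1 + m).choose (n - 1) : ℝ) * (if j ≤ m then Real.log j else 0)
          - ((n - 1 + m).choose (n - 1) : ℝ) * (if j ≤ D - m then Real.log j else 0)) := by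
        exact Finset.sum_congr rfl fun m _ => by ring
    _ = (((n + (j - 1)).choose n : ℝ) - ((n + (D - j)).choose n : ℝ)) * Real.log j := by
        rw [Finset.sum_sub_distrib, Finset.sum_sub_distrib, split0, split1, split2]
        ring
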